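/- Let λ ∈ ℤⁿ and let S = ⋃_{s=a}^{b} ({s} × [f_s..l_s]) ⊆ [1..n] × ℤ be a snake-shaped set (a ≤ b, f_{s+1} ≤ f_s ≤ l_{s+1} ≤ l_s for a ≤ s < b, and f_s ≥ l_{s+2} for a ≤ s ≤ b−2). Suppose x, y ∈ S with x <̇ y (componentwise strict order). Then x and y belong to adjacent columns, say x = (t,u) and y = (t+1,v), and the falling factorial (λ_t − λ_{t+1})^{\underline{l_{t+1} − f_t}} is divisible by dist_λ(x,y), where dist_λ((x₁,x₂),(y₁,y₂)) := y₁ − x₁ + λ_{x₁} − λ_{y₁} + x₂ − y₂. -/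

import Mathlib

/-- Lemma: comparable points of a snake-shaped set lie in adjacent columns, and
the falling factorial `(λ_t − λ_{t+1})^{\underline{l_{t+1} − f_t}}` is
divisible by `dist_λ(x,y) = y₁ − x₁ + λ_{x₁} − λ_{y₁} + x₂ − y₂`. -/
theorem stmt_8 (n : ℕ) (lam : ℤ → ℤ) (a b : ℤ) (ha : 1 ≤ a) (hb : b ≤ (n : ℤ))
    (hab : a ≤ b) (f l : ℤ → ℤ)
    (S : Set (ℤ × ℤ))
    (hS : S = {p : ℤ × ℤ | a ≤ p.1 ∧ p.1 ≤ b ∧ f p.1 ≤ p.2 ∧ p.2 ≤ l p.1})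
    (hSne : S.Nonempty)
    (hshape1 : ∀ s : ℤ, a ≤ s → s ≤ b - 1 →
      f (s + 1) ≤ f s ∧ f s ≤ l (s + 1) ∧ l (s + 1) ≤ l s)
    (hshape2 : ∀ s : ℤ, a ≤ s → s ≤ b - 2 → l (s + 2) ≤ f s)
    (x y : ℤ × ℤ) (hx : x ∈ S) (hy : y ∈ S)
    (hlt : x.1 < y.1 ∧ x.2 < y.2) :
    y.1 = x.1 + 1 ∧
      (y.1 - x.1 + lam x.1 - lam y.1 + x.2 - y.2) ∣
        ∏ j ∈ Finset.range (l (x.1 + 1) - f x.1).toNat,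
          (lam x.1 - lam (x.1 + 1) - (j : ℤ)) := by
  subst hS
  obtain ⟨hxa, hxb, hxf, hxl⟩ := hx
  obtain ⟨hya, hyb, hyf, hyl⟩ := hy
  -- monotonicity of l
  have hmono : ∀ s : ℤ, a ≤ s → ∀ s' : ℤ, s ≤ s' → s' ≤ b → l s' ≤ l s := by
    intro s hs s' hss' hs'b
    refine Int.le_induction (motive := fun t _ => t ≤ b → l t ≤ l s)
      (fun _ => le_refl _) (fun m hm ih hmb => ?_) s' hss' hs'b
    have h1 := (hshape1 m (le_trans hs hm) (by omega)).2.2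
    have h2 := ih (by omega)
    omega
  have h1 : y.1 = x.1 + 1 := by
    by_contra h
    have h2 : x.1 + 2 ≤ y.1 := by omega
    have h3 := hshape2 x.1 hxa (by omega)
    have h4 : l y.1 ≤ l (x.1 + 2) := hmono (x.1 + 2) (by omega) y.1 h2 hyb
    omega
  refine ⟨h1, ?_⟩
  have hmem : (y.2 - x.2 - 1).toNat ∈ Finset.range (l (x.1 + 1) - f x.1).toNat := by
    rw [Finset.mem_range]
    have : y.2 ≤ l (x.1 + 1) := by rw [← h1]; exact hyl
    omega
  have heq : (y.1 - x.1 + lam x.1 - lam y.1 + x.2 - y.2)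
      = lam x.1 - lam (x.1 + 1) - (((y.2 - x.2 - 1).toNat : ℕ) : ℤ) := by
    rw [h1]; omega
  rw [heq]
  exact Finset.dvd_prod_of_mem _ hmem
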